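/- Let ρ be a 2×2 real symmetric matrix and τ a 2×2 real symmetric positive definite matrix, and for λ > 0 define f_λ(z) = λ / (1 + √(1 + 2λz²)). Then the matrix equation T = (λ/2)(ρ̃ T ρ̃ + I₂)⁻¹, where ρ̃ = τ^{-1/2} ρ τ^{-1/2}, has a unique positive definite symmetric solution T, given by T = f_λ(ρ̃) (functional calculus applied to the symmetric matrix ρ̃). -/

import Mathlib

open Matrix

/-- The scalar function `f_λ(z) = λ / (1 + √(1 + 2λz²))`. -/
noncomputable def fLam (lam z : ℝ) : ℝ :=
  lam / (1 + Real.sqrt (1 + 2 * lam * z ^ 2))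

lemma fLam_pos (lam x : ℝ) (hlam : 0 < lam) : 0 < fLam lam x := by
  have h0 : (0:ℝ) ≤ 1 + 2 * lam * x ^ 2 := by positivity
  have : (0:ℝ) < 1 + Real.sqrt (1 + 2 * lam * x ^ 2) := by positivity
  exact div_pos hlam this

lemma fLam_root (lam x : ℝ) (hlam : 0 < lam) :
    x ^ 2 * fLam lam x ^ 2 + fLam lam x = lam / 2 := by
  have h0 : (0:ℝ) ≤ 1 + 2 * lam * x ^ 2 := by positivity
  have hs0 : 0 ≤ Real.sqrt (1 + 2 * lam * x ^ 2) := Real.sqrt_nonneg _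
  have hs2 : Real.sqrt (1 + 2 * lam * x ^ 2) ^ 2 = 1 + 2 * lam * x ^ 2 :=
    Real.sq_sqrt h0
  set s := Real.sqrt (1 + 2 * lam * x ^ 2) with hs
  have h1 : (0:ℝ) < 1 + s := by linarith
  rw [fLam, ← hs]
  field_simp
  linear_combination (-1 : ℝ) * hs2

lemma root_eq_fLam (lam x a : ℝ) (hlam : 0 < lam) (ha : 0 < a)
    (h : x ^ 2 * a ^ 2 + a = lam / 2) : a = fLam lam x := by
  have hf := fLam_root lam x hlam
  have hp := fLam_pos lam x hlam
  set b := fLam lam x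
  have key : (a - b) * (x ^ 2 * (a + b) + 1) = 0 := by linear_combination h - hf
  have hpos : 0 < x ^ 2 * (a + b) + 1 := by nlinarith [sq_nonneg x]
  rcases mul_eq_zero.mp key with h1 | h1
  · linarith
  · linarith

lemma diag_case (lam x y : ℝ) (hlam : 0 < lam) (T : Matrix (Fin 2) (Fin 2) ℝ)
    (hsym : Tᵀ = T) (hpd : T.PosDef)
    (heq : T * Matrix.diagonal ![x, y] * T * Matrix.diagonal ![x, y] + T = (lam / 2) • 1) :
    T = Matrix.diagonal ![fLam lam x, fLam lam y] := by
  have hb' : T 1 0 = T 0 1 := by simpa using congrFun (congrFun hsym 0) 1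
  have ha : 0 < T 0 0 := by
    have h := hpd.dotProduct_mulVec_pos (x := (Pi.single 0 1 : Fin 2 → ℝ)) (by intro h; simpa using congrFun h 0)
    simpa [dotProduct, mulVec, Fin.sum_univ_two, Pi.single_apply] using h
  have hc : 0 < T 1 1 := by
    have h := hpd.dotProduct_mulVec_pos (x := (Pi.single 1 1 : Fin 2 → ℝ)) (by intro h; simpa using congrFun h 1)
    simpa [dotProduct, mulVec, Fin.sum_univ_two, Pi.single_apply] using h
  have e00 := congrFun (congrFun heq 0) 0
  have e01 := congrFun (congrFun heq 0) 1
  have e10 := congrFun (congrFun heq 1) 0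
  have e11 := congrFun (congrFun heq 1) 1
  simp [Matrix.mul_apply, Fin.sum_univ_two, Matrix.one_apply, hb'] at e00 e01 e10 e11
  have hb : T 0 1 = 0 := by
    by_contra hb
    have h1 : T 0 0 * x * y + T 1 1 * y ^ 2 + 1 = 0 := by
      rcases mul_eq_zero.mp (show T 0 1 * (T 0 0 * x * y + T 1 1 * y ^ 2 + 1) = 0 by
        linear_combination e01) with h | h
      · exact absurd h hb
      · exact h
    have h2 : T 0 0 * x ^ 2 + T 1 1 * x * y + 1 = 0 := by
      rcases mul_eq_zero.mp (show T 0 1 * (T 0 0 * x ^ 2 + T 1 1 * x * y + 1) = 0 by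
        linear_combination e10) with h | h
      · exact absurd h hb
      · exact h
    have hxy : x = y := by linear_combination x * h1 - y * h2
    rw [← hxy] at h1
    nlinarith [mul_nonneg ha.le (sq_nonneg x), mul_nonneg hc.le (sq_nonneg x)]
  have hA : T 0 0 = fLam lam x := by
    apply root_eq_fLam lam x _ hlam ha
    rw [hb] at e00; linear_combination e00
  have hC : T 1 1 = fLam lam y := by
    apply root_eq_fLam lam y _ hlam hc
    rw [hb] at e11; linear_combination e11
  ext i j
  fin_cases i <;> fin_cases j <;> simp [Matrix.diagonal_apply, hA, hC, hb, hb']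

lemma posdef_conj {U T : Matrix (Fin 2) (Fin 2) ℝ} (hT : T.PosDef) (hU : U * Uᵀ = 1) :
    (U * T * Uᵀ).PosDef := by
  have hsym : Tᵀ = T := by
    simpa [Matrix.conjTranspose_eq_transpose_of_trivial] using hT.1.eq
  refine Matrix.PosDef.of_dotProduct_mulVec_pos ?_ ?_
  · show (U * T * Uᵀ)ᴴ = U * T * Uᵀ
    simp [Matrix.conjTranspose_eq_transpose_of_trivial, Matrix.transpose_mul, hsym,
      Matrix.mul_assoc]
  · intro x hx
    have hz : Uᵀ *ᵥ x ≠ 0 := by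
      intro h0
      apply hx
      have h : (U * Uᵀ) *ᵥ x = U *ᵥ (Uᵀ *ᵥ x) := by rw [Matrix.mulVec_mulVec]
      rw [hU, Matrix.one_mulVec] at h
      rw [h, h0, Matrix.mulVec_zero]
    have h := hT.dotProduct_mulVec_pos hz
    have key : star x ⬝ᵥ ((U * T * Uᵀ) *ᵥ x)
        = star (Uᵀ *ᵥ x) ⬝ᵥ (T *ᵥ (Uᵀ *ᵥ x)) := by
      simp only [star_trivial, ← Matrix.mulVec_mulVec]
      rw [Matrix.dotProduct_mulVec, ← Matrix.mulVec_transpose]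
    rw [key]
    exact h

/-- For 2×2 real symmetric `ρ`, positive definite `τ`, and `λ > 0`, the equation
`T = (λ/2)(ρ̃Tρ̃ + I)⁻¹` with `ρ̃ = τ^{-1/2}ρτ^{-1/2}` has a unique positive definite
symmetric solution, given by `T = f_λ(ρ̃)` in the sense of functional calculus on
spectral decompositions of `ρ̃`. -/
theorem riccati_type_unique_solution
    (ρ τ : Matrix (Fin 2) (Fin 2) ℝ) (hρ : ρᵀ = ρ) (hτ : τᵀ = τ) (hτpd : τ.PosDef)
    (lam : ℝ) (hlam : 0 < lam)
    (S : Matrix (Fin 2) (Fin 2) ℝ) (hSsym : Sᵀ = S) (hSpd : S.PosDef)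
    (hSsq : S * S = τ⁻¹) :
    letI ρt : Matrix (Fin 2) (Fin 2) ℝ := S * ρ * S
    (∃! T : Matrix (Fin 2) (Fin 2) ℝ,
      Tᵀ = T ∧ T.PosDef ∧ T = (lam / 2) • (ρt * T * ρt + 1)⁻¹) ∧
    (∀ T : Matrix (Fin 2) (Fin 2) ℝ,
      (Tᵀ = T ∧ T.PosDef ∧ T = (lam / 2) • (ρt * T * ρt + 1)⁻¹) →
      ∀ (U : Matrix (Fin 2) (Fin 2) ℝ) (x₁ x₂ : ℝ),
        U * Uᵀ = 1 → ρt = U * Matrix.diagonal ![x₁, x₂] * Uᵀ →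
        T = U * Matrix.diagonal ![fLam lam x₁, fLam lam x₂] * Uᵀ) := by
  set A : Matrix (Fin 2) (Fin 2) ℝ := S * ρ * S with hAdef
  have hAsym : Aᵀ = A := by
    rw [hAdef]
    simp [Matrix.transpose_mul, hρ, hSsym, Matrix.mul_assoc]
  -- Part 2 first
  have h2 : ∀ T : Matrix (Fin 2) (Fin 2) ℝ,
      (Tᵀ = T ∧ T.PosDef ∧ T = (lam / 2) • (A * T * A + 1)⁻¹) →
      ∀ (U : Matrix (Fin 2) (Fin 2) ℝ) (x₁ x₂ : ℝ),
        U * Uᵀ = 1 → A = U * Matrix.diagonal ![x₁, x₂] * Uᵀ →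
        T = U * Matrix.diagonal ![fLam lam x₁, fLam lam x₂] * Uᵀ := by
    rintro T ⟨hTsym, hTpd, hTeq⟩ U x₁ x₂ hUU hdec
    have hUU' : Uᵀ * U = 1 := mul_eq_one_comm.mp hUU
    have hASA : (A * T * A).PosSemidef := by
      have h := hTpd.posSemidef.mul_mul_conjTranspose_same A
      rwa [Matrix.conjTranspose_eq_transpose_of_trivial, hAsym] at h
    have hM : (A * T * A + 1).PosDef := Matrix.PosDef.posSemidef_add hASA Matrix.PosDef.one
    have hdet : IsUnit (A * T * A + 1).det := (Matrix.isUnit_iff_isUnit_det _).mp hM.isUnit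
    have hTM : T * (A * T * A + 1) = (lam / 2) • 1 := by
      have h := congrArg (fun X => X * (A * T * A + 1)) hTeq
      rw [Matrix.smul_mul, Matrix.nonsing_inv_mul _ hdet] at h
      exact h
    have hpoly : T * A * T * A + T = (lam / 2) • 1 := by
      calc T * A * T * A + T = T * (A * T * A + 1) := by noncomm_ring
        _ = (lam / 2) • 1 := hTM
    have e1 : ∀ X : Matrix (Fin 2) (Fin 2) ℝ, Uᵀ * (U * X) = X := fun X => by
      rw [← Matrix.mul_assoc, hUU', Matrix.one_mul]
    have e2 : ∀ X : Matrix (Fin 2) (Fin 2) ℝ, U * (Uᵀ * X) = X := fun X => by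
      rw [← Matrix.mul_assoc, hUU, Matrix.one_mul]
    set D := Matrix.diagonal ![x₁, x₂] with hD
    set T' := Uᵀ * T * U with hT'
    have hT'sym : T'ᵀ = T' := by
      rw [hT']
      simp [Matrix.transpose_mul, hTsym, Matrix.mul_assoc]
    have hT'pd : T'.PosDef := by
      have h := posdef_conj (U := Uᵀ) hTpd (by rw [Matrix.transpose_transpose]; exact hUU')
      rwa [Matrix.transpose_transpose] at h
    have hT'eq : T' * D * T' * D + T' = (lam / 2) • 1 := by
      have hstep : T' * D * T' * D + T' = Uᵀ * (T * A * T * A + T) * U := by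
        rw [hdec, hT']
        simp [Matrix.mul_add, Matrix.add_mul, Matrix.mul_assoc, e1, e2, hUU, hUU']
      rw [hstep, hpoly]
      simp [Matrix.mul_smul, Matrix.smul_mul, hUU']
    have hfinal := diag_case lam x₁ x₂ hlam T' hT'sym hT'pd hT'eq
    have hTT : T = U * T' * Uᵀ := by
      rw [hT']
      simp [Matrix.mul_assoc, e2, hUU, Matrix.mul_one]
    rw [hTT, hfinal]
  -- spectral decomposition of A
  have hAherm : A.IsHermitian := by
    show Aᴴ = A
    rw [Matrix.conjTranspose_eq_transpose_of_trivial]; exact hAsym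
  set U0 : Matrix (Fin 2) (Fin 2) ℝ := (hAherm.eigenvectorUnitary : Matrix (Fin 2) (Fin 2) ℝ)
    with hU0def
  set x₁ : ℝ := hAherm.eigenvalues 0 with hx1
  set x₂ : ℝ := hAherm.eigenvalues 1 with hx2
  have hstar : star U0 = U0ᵀ := by
    rw [← Matrix.conjTranspose_eq_transpose_of_trivial]; rfl
  have hU0 : U0 * U0ᵀ = 1 := by
    rw [← hstar]
    exact Matrix.mem_unitaryGroup_iff.mp hAherm.eigenvectorUnitary.2
  have hdec : A = U0 * Matrix.diagonal ![x₁, x₂] * U0ᵀ := by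
    have h := hAherm.spectral_theorem
    rw [Unitary.conjStarAlgAut_apply] at h
    rw [← hstar]
    have hD : Matrix.diagonal ![x₁, x₂] = Matrix.diagonal (RCLike.ofReal ∘ hAherm.eigenvalues) := by
      ext i j
      fin_cases i <;> fin_cases j <;> simp [hx1, hx2, Matrix.diagonal_apply]
    rw [hD]; exact h
  have hfpos : ∀ i : Fin 2, 0 < (![fLam lam x₁, fLam lam x₂] : Fin 2 → ℝ) i := by
    intro i
    fin_cases i <;> simpa using fLam_pos lam _ hlam
  set F := Matrix.diagonal ![fLam lam x₁, fLam lam x₂] with hF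
  set Te := U0 * F * U0ᵀ with hTe
  have hU0' : U0ᵀ * U0 = 1 := mul_eq_one_comm.mp hU0
  have e1 : ∀ X : Matrix (Fin 2) (Fin 2) ℝ, U0ᵀ * (U0 * X) = X := fun X => by
    rw [← Matrix.mul_assoc, hU0', Matrix.one_mul]
  have e2 : ∀ X : Matrix (Fin 2) (Fin 2) ℝ, U0 * (U0ᵀ * X) = X := fun X => by
    rw [← Matrix.mul_assoc, hU0, Matrix.one_mul]
  have hTesym : Teᵀ = Te := by
    rw [hTe, hF]
    simp [Matrix.transpose_mul, Matrix.diagonal_transpose, Matrix.mul_assoc]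
  have hTepd : Te.PosDef := posdef_conj (Matrix.PosDef.diagonal hfpos) hU0
  have hFDF : F * Matrix.diagonal ![x₁, x₂] * F * Matrix.diagonal ![x₁, x₂] + F
      = (lam / 2) • 1 := by
    rw [hF]
    simp only [Matrix.diagonal_mul_diagonal]
    ext i j
    fin_cases i <;> fin_cases j <;>
      simp [Matrix.diagonal_apply, Matrix.one_apply]
    · linear_combination fLam_root lam x₁ hlam
    · linear_combination fLam_root lam x₂ hlam
  have hTeM : Te * (A * Te * A + 1) = (lam / 2) • 1 := by
    have hstep : Te * (A * Te * A + 1) = U0 * (F * Matrix.diagonal ![x₁, x₂] * F *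
        Matrix.diagonal ![x₁, x₂] + F) * U0ᵀ := by
      rw [hdec, hTe]
      simp [Matrix.mul_add, Matrix.add_mul, Matrix.mul_one, Matrix.mul_assoc, e1, e2, hU0, hU0']
    rw [hstep, hFDF]
    simp [Matrix.mul_smul, Matrix.smul_mul, hU0]
  have hlamne : lam ≠ 0 := ne_of_gt hlam
  have hinv : (A * Te * A + 1)⁻¹ = (2 / lam) • Te := by
    apply Matrix.inv_eq_left_inv
    rw [Matrix.smul_mul, hTeM, smul_smul]
    rw [show (2 / lam) * (lam / 2) = 1 by field_simp]
    exact one_smul _ _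
  have hTeeq : Te = (lam / 2) • (A * Te * A + 1)⁻¹ := by
    rw [hinv, smul_smul, show (lam / 2) * (2 / lam) = 1 by field_simp, one_smul]
  exact ⟨⟨Te, ⟨hTesym, hTepd, hTeeq⟩, fun T hT => by
    rw [h2 T hT U0 x₁ x₂ hU0 hdec, hTe, hF]⟩, h2⟩
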